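/- Let Q : [0, ∞) → [0, ∞) be a continuous strictly increasing function with Q(0) = 0 and Q(t) → ∞. Let G : [0, ∞) → ℝ^m be bounded and measurable, and for ε > 0 define G_t^ε = (1/Q(ε)) ∫_{t∨ε}^∞ exp(−(Q(r) − Q(t∨ε))/Q(ε)) · G(r) dQ(r). Then (a) |G_t^ε| ≤ sup_{r≥0} |G_r| for all t ≥ 0, and (b) |G_t^ε − G_t| ≤ exp(2 − 1/√(Q(ε))) · sup_{r≥0}|G_r| + sup{ |G_r − G_t| : 0 ≤ Q(r) − Q(t) ≤ √(Q(ε)) ∨ Q(ε) } for all t ≥ 0. -/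

import Mathlib

open MeasureTheory Filter Set

lemma aux_exp_integrableOn (p d : ℝ) {c : ℝ} (hc : 0 < c) :
    IntegrableOn (fun x => Real.exp (-(x - p) / c)) (Set.Ici d) := by
  have h : (fun x => Real.exp (-(x - p) / c))
      = fun x => Real.exp (p / c) * Real.exp (-(1 / c) * x) := by
    funext x
    rw [← Real.exp_add]
    congr 1
    ring
  rw [h, integrableOn_Ici_iff_integrableOn_Ioi]
  exact (exp_neg_integrableOn_Ioi d (by positivity)).const_mul _

lemma aux_exp_integral (b : ℝ) {c : ℝ} (hc : 0 < c) :
    ∫ x in Set.Ioi b, Real.exp (-(x - b) / c) = c := by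
  have hderiv : ∀ x ∈ Set.Ioi b,
      HasDerivAt (fun x => -c * Real.exp (-(x - b) / c)) (Real.exp (-(x - b) / c)) x := by
    intro x _
    have h1 : HasDerivAt (fun x : ℝ => -(x - b) / c) (-1 / c) x := by
      simpa using (((hasDerivAt_id x).sub_const b).neg).div_const c
    have h2 := (h1.exp).const_mul (-c)
    refine h2.congr_deriv ?_
    rw [show -c * (Real.exp (-(x - b) / c) * (-1 / c)) = Real.exp (-(x - b) / c) * (c / c) by ring,
      div_self hc.ne', mul_one]
  have hcont : ContinuousWithinAt (fun x => -c * Real.exp (-(x - b) / c)) (Set.Ici b) b :=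
    (Continuous.continuousWithinAt (by continuity))
  have htend : Tendsto (fun x => -c * Real.exp (-(x - b) / c)) atTop (nhds 0) := by
    have h1 : Tendsto (fun x : ℝ => -(x - b) / c) atTop atBot := by
      apply Tendsto.atBot_div_const hc
      apply tendsto_neg_atBot_iff.mpr
      simpa using (tendsto_atTop_add_const_right atTop (-b) tendsto_id).congr (fun x => (sub_eq_add_neg x b).symm)
    have h2 := (Real.tendsto_exp_atBot.comp h1).const_mul (-c)
    simpa using h2
  have := integral_Ioi_of_hasDerivAt_of_tendsto hcont hderiv
    ((aux_exp_integrableOn b b hc).mono_set Set.Ioi_subset_Ici_self) htend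
  simpa using this

lemma aux_singleton (Q : StieltjesFunction ℝ) (hQc : Continuous Q) (x : ℝ) :
    Q.measure {x} = 0 := by
  rw [Q.measure_singleton]
  have : Function.leftLim (⇑Q) x = Q x :=
    leftLim_eq_of_tendsto ((hQc.tendsto x).mono_left nhdsWithin_le_nhds)
  rw [this, sub_self, ENNReal.ofReal_zero]

lemma aux_ivt (Q : StieltjesFunction ℝ) (hQc : Continuous Q)
    (hQtop : Tendsto (⇑Q) atTop atTop) {a v : ℝ} (h : Q a ≤ v) :
    ∃ b, a ≤ b ∧ Q b = v := by
  obtain ⟨T, hT1, hT2⟩ := ((hQtop.eventually_ge_atTop v).and (eventually_ge_atTop a)).exists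
  obtain ⟨b, hb, hb2⟩ := intermediate_value_Icc hT2 hQc.continuousOn ⟨h, hT1⟩
  exact ⟨b, hb.1, hb2⟩

lemma aux_map (Q : StieltjesFunction ℝ) (hQc : Continuous Q)
    (hQmono : StrictMonoOn Q (Set.Ici 0)) (hQtop : Tendsto (⇑Q) atTop atTop)
    {a : ℝ} (ha : 0 ≤ a) :
    (Q.measure.restrict (Set.Ici a)).map Q = volume.restrict (Set.Ici (Q a)) := by
  have hlt : ∀ x y : ℝ, 0 ≤ x → 0 ≤ y → x < y → Q x < Q y := fun x y hx hy h =>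
    hQmono hx hy h
  have key : ∀ u v : ℝ, u < v →
      Q.measure (Q ⁻¹' Set.Ioc u v ∩ Set.Ici a)
        = volume (Set.Ioc u v ∩ Set.Ici (Q a)) := by
    intro u v huv
    by_cases hv : v ≤ Q a
    · have h1 : Q.measure (Q ⁻¹' Set.Ioc u v ∩ Set.Ici a) = 0 := by
        refine measure_mono_null (fun r hr => ?_) (aux_singleton Q hQc a)
        obtain ⟨⟨hu, hvv⟩, har⟩ := hr
        have hQar : Q a ≤ Q r := Q.mono har
        have hQra : Q r = Q a := le_antisymm (hvv.trans hv) hQar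
        rcases (show a ≤ r from har).eq_or_lt with h | h
        · exact h.symm ▸ rfl
        · exact absurd (hlt a r ha (ha.trans har) h) (by rw [hQra]; simp)
      have h2 : volume (Set.Ioc u v ∩ Set.Ici (Q a)) = 0 := by
        refine measure_mono_null (fun x hx => ?_) (Real.volume_singleton (a := Q a))
        obtain ⟨⟨_, hx2⟩, hx3⟩ := hx
        exact le_antisymm (hx2.trans hv) hx3
      rw [h1, h2]
    · push_neg at hv
      set u' := max u (Q a) with hu'
      have hu'v : u' < v := max_lt huv hv
      obtain ⟨b, hab, hQb⟩ := aux_ivt Q hQc hQtop hv.le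
      obtain ⟨b', hab', hQb'⟩ := aux_ivt Q hQc hQtop (le_max_right u (Q a))
      have hb0 : 0 ≤ b := ha.trans hab
      have hb'0 : 0 ≤ b' := ha.trans hab'
      have hb'b : b' ≤ b := by
        by_contra hc
        push_neg at hc
        have h := hlt b b' hb0 hb'0 hc
        rw [hQb, hQb'] at h
        exact absurd h (not_lt.mpr hu'v.le)
      -- left side
      have hsub1 : Set.Ioc b' b ⊆ Q ⁻¹' Set.Ioc u v ∩ Set.Ici a := by
        intro r hrm
        obtain ⟨h1, h2⟩ := hrm
        have hr0 : a ≤ r := hab'.trans h1.le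
        refine ⟨⟨lt_of_le_of_lt (le_max_left u (Q a)) ?_, ?_⟩, hr0⟩
        · rw [← hQb']; exact hlt b' r hb'0 (ha.trans hr0) h1
        · rw [← hQb]; exact Q.mono h2
      have hsub2 : Q ⁻¹' Set.Ioc u v ∩ Set.Ici a ⊆ Set.Icc b' b := by
        rintro r ⟨⟨h1, h2⟩, h3⟩
        have hr0 : (0:ℝ) ≤ r := ha.trans h3
        constructor
        · by_contra hc
          push_neg at hc
          have hlt' := hlt r b' hr0 hb'0 hc
          rw [hQb'] at hlt'
          rcases lt_max_iff.mp hlt' with h | h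
          · exact absurd h (not_lt.mpr h1.le)
          · exact absurd h (not_lt.mpr (Q.mono h3))
        · by_contra hc
          push_neg at hc
          have h := hlt b r hb0 hr0 hc
          rw [hQb] at h
          exact absurd h (not_lt.mpr h2)
      have hL : Q.measure (Q ⁻¹' Set.Ioc u v ∩ Set.Ici a) = ENNReal.ofReal (v - u') := by
        refine le_antisymm ?_ ?_
        · refine le_trans (measure_mono hsub2) ?_
          rw [← Set.Ioc_insert_left hb'b, Set.insert_eq]
          refine le_trans (measure_union_le _ _) ?_
          rw [aux_singleton Q hQc b', Q.measure_Ioc, hQb, hQb', zero_add]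
        · have heq : Q.measure (Set.Ioc b' b) = ENNReal.ofReal (v - u') := by
            rw [Q.measure_Ioc, hQb, hQb']
          rw [← heq]
          exact measure_mono hsub1
      have hR : volume (Set.Ioc u v ∩ Set.Ici (Q a)) = ENNReal.ofReal (v - u') := by
        refine le_antisymm ?_ ?_
        · refine le_trans (measure_mono (fun x hx => ?_)) (le_of_eq (Real.volume_Icc (a := u') (b := v)))
          obtain ⟨⟨hx1, hx2⟩, hx3⟩ := hx
          exact ⟨max_le hx1.le hx3, hx2⟩
        · rw [← Real.volume_Ioc (a := u') (b := v)]
          refine measure_mono (fun x hx => ?_)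
          obtain ⟨hx1, hx2⟩ := hx
          exact ⟨⟨lt_of_le_of_lt (le_max_left u (Q a)) hx1, hx2⟩,
            le_of_lt (lt_of_le_of_lt (le_max_right u (Q a)) hx1)⟩
      rw [hL, hR]
  refine Measure.ext_of_Ioc' _ _ (fun u v huv => ?_) (fun u v huv => ?_)
  · rw [Measure.map_apply hQc.measurable measurableSet_Ioc,
      Measure.restrict_apply (hQc.measurable measurableSet_Ioc), key u v huv]
    exact ne_top_of_le_ne_top (by simp [Real.volume_Ioc]) (measure_mono Set.inter_subset_left)
  · rw [Measure.map_apply hQc.measurable measurableSet_Ioc,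
      Measure.restrict_apply (hQc.measurable measurableSet_Ioc),
      Measure.restrict_apply measurableSet_Ioc]
    exact key u v huv


set_option maxHeartbeats 1000000 in
/-- Smoothing approximation lemma: let `Q` be a continuous strictly increasing clock with
`Q(0) = 0`, `Q(t) → ∞`, and `G : [0,∞) → ℝ^m` bounded measurable.  With
`G_t^ε = (1/Q(ε)) ∫_{t∨ε}^∞ exp(−(Q(r) − Q(t∨ε))/Q(ε)) G(r) dQ(r)`, one has
(a) `|G_t^ε| ≤ sup_{r≥0} |G_r|` and
(b) `|G_t^ε − G_t| ≤ exp(2 − 1/√Q(ε)) sup_{r≥0}|G_r|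
      + sup{ |G_r − G_t| : 0 ≤ Q(r) − Q(t) ≤ √Q(ε) ∨ Q(ε) }` for all `t ≥ 0`. -/
theorem stmt_16 (m : ℕ) (Q : StieltjesFunction ℝ) (hQc : Continuous Q)
    (hQmono : StrictMonoOn Q (Set.Ici 0)) (hQ0 : Q 0 = 0)
    (hQtop : Tendsto (fun t => Q t) atTop atTop)
    (G : ℝ → EuclideanSpace ℝ (Fin m)) (hG : Measurable G)
    (C : ℝ) (hbdd : ∀ r, ‖G r‖ ≤ C)
    (ε : ℝ) (hε : 0 < ε) (t : ℝ) (ht : 0 ≤ t) :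
    (‖(Q ε)⁻¹ • ∫ r in Set.Ici (max t ε),
        Real.exp (-(Q r - Q (max t ε)) / Q ε) • G r ∂Q.measure‖ ≤
      ⨆ r : Set.Ici (0 : ℝ), ‖G r‖) ∧
    (‖((Q ε)⁻¹ • ∫ r in Set.Ici (max t ε),
        Real.exp (-(Q r - Q (max t ε)) / Q ε) • G r ∂Q.measure) - G t‖ ≤
      Real.exp (2 - 1 / Real.sqrt (Q ε)) * (⨆ r : Set.Ici (0 : ℝ), ‖G r‖) +
        sSup {x : ℝ | ∃ r : ℝ, 0 ≤ Q r - Q t ∧ Q r - Q t ≤ max (Real.sqrt (Q ε)) (Q ε) ∧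
          x = ‖G r - G t‖}) := by
  have hQtop' : Tendsto (⇑Q) atTop atTop := hQtop
  have hQm : Measurable (⇑Q) := hQc.measurable
  set c : ℝ := Q ε with hc
  have hcpos : 0 < c := by
    rw [hc, ← hQ0]
    exact hQmono Set.self_mem_Ici hε.le hε
  set a : ℝ := max t ε with hadef
  have hta : t ≤ a := le_max_left t ε
  have hεa : ε ≤ a := le_max_right t ε
  have ha0 : 0 ≤ a := ht.trans hta
  have hQt0 : 0 ≤ Q t := by rw [← hQ0]; exact Q.mono ht
  have hQta : Q t ≤ Q a := Q.mono hta
  have hQac : Q a ≤ Q t + c := by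
    rcases max_choice t ε with h | h <;> rw [hadef, h]
    · linarith
    · rw [← hc]; linarith
  have hmap := aux_map Q hQc hQmono hQtop' ha0
  -- integrability of the weight
  have hInt_e : Integrable (fun r => Real.exp (-(Q r - Q a) / c))
      (Q.measure.restrict (Set.Ici a)) := by
    have h0 : Integrable (fun x => Real.exp (-(x - Q a) / c))
        ((Q.measure.restrict (Set.Ici a)).map Q) := by
      rw [hmap]
      exact aux_exp_integrableOn (Q a) (Q a) hcpos
    have := (integrable_map_measure
      (Continuous.aestronglyMeasurable (by continuity)) hQm.aemeasurable).mp h0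
    exact this
  -- total weight integral
  have hW : ∫ r in Set.Ici a, Real.exp (-(Q r - Q a) / c) ∂Q.measure = c := by
    have h1 : ∫ x, Real.exp (-(x - Q a) / c) ∂((Q.measure.restrict (Set.Ici a)).map Q)
        = ∫ r, Real.exp (-(Q r - Q a) / c) ∂(Q.measure.restrict (Set.Ici a)) :=
      integral_map hQm.aemeasurable (Continuous.aestronglyMeasurable (by continuity))
    rw [← h1, hmap, MeasureTheory.integral_Ici_eq_integral_Ioi]
    exact aux_exp_integral (Q a) hcpos
  -- measurability of the integrand
  have hem : Measurable fun r => Real.exp (-(Q r - Q a) / c) :=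
    Real.measurable_exp.comp (((hQm.sub measurable_const).neg).div_const c)
  have hC0 : (0:ℝ) ≤ C := (norm_nonneg _).trans (hbdd 0)
  have hIntF : Integrable (fun r => Real.exp (-(Q r - Q a) / c) • G r)
      (Q.measure.restrict (Set.Ici a)) := by
    refine Integrable.mono' (hInt_e.const_mul C) ((hem.smul hG).aestronglyMeasurable)
      (Filter.Eventually.of_forall fun r => ?_)
    rw [norm_smul, Real.norm_eq_abs, abs_of_pos (Real.exp_pos _)]
    calc Real.exp (-(Q r - Q a) / c) * ‖G r‖
        ≤ Real.exp (-(Q r - Q a) / c) * C :=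
          mul_le_mul_of_nonneg_left (hbdd r) (Real.exp_pos _).le
      _ = C * Real.exp (-(Q r - Q a) / c) := mul_comm _ _
  -- the sup of ‖G‖
  have hMbdd : BddAbove (Set.range fun r : Set.Ici (0:ℝ) => ‖G r‖) := by
    refine ⟨C, ?_⟩
    rintro x ⟨r, rfl⟩
    exact hbdd r
  have hMle : ∀ r : ℝ, 0 ≤ r → ‖G r‖ ≤ ⨆ r : Set.Ici (0:ℝ), ‖G r‖ :=
    fun r hr => le_ciSup hMbdd ⟨r, hr⟩
  have hM0 : 0 ≤ ⨆ r : Set.Ici (0:ℝ), ‖G r‖ := (norm_nonneg _).trans (hMle 0 le_rfl)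
  set M : ℝ := ⨆ r : Set.Ici (0:ℝ), ‖G r‖ with hM
  constructor
  · -- part (a)
    rw [norm_smul, Real.norm_eq_abs, abs_of_pos (inv_pos.mpr hcpos)]
    have hb : ‖∫ r in Set.Ici a, Real.exp (-(Q r - Q a) / c) • G r ∂Q.measure‖
        ≤ ∫ r in Set.Ici a, M * Real.exp (-(Q r - Q a) / c) ∂Q.measure := by
      refine norm_integral_le_of_norm_le (hInt_e.const_mul M)
        ((ae_restrict_iff' measurableSet_Ici).mpr (Filter.Eventually.of_forall fun r hr => ?_))
      rw [norm_smul, Real.norm_eq_abs, abs_of_pos (Real.exp_pos _)]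
      calc Real.exp (-(Q r - Q a) / c) * ‖G r‖
          ≤ Real.exp (-(Q r - Q a) / c) * M :=
            mul_le_mul_of_nonneg_left (hMle r (ha0.trans hr)) (Real.exp_pos _).le
        _ = M * Real.exp (-(Q r - Q a) / c) := mul_comm _ _
    have hMint : ∫ r in Set.Ici a, M * Real.exp (-(Q r - Q a) / c) ∂Q.measure = M * c := by
      rw [integral_const_mul, hW]
    calc c⁻¹ * ‖∫ r in Set.Ici a, Real.exp (-(Q r - Q a) / c) • G r ∂Q.measure‖
        ≤ c⁻¹ * (M * c) :=
          mul_le_mul_of_nonneg_left (hb.trans hMint.le) (inv_pos.mpr hcpos).le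
      _ = M := by field_simp
  · -- part (b)
    set δ : ℝ := max (Real.sqrt c) c with hδ
    have hδc : c ≤ δ := le_max_right _ _
    have hδ0 : 0 ≤ δ := hcpos.le.trans hδc
    set p : ℝ := Q t + δ with hp
    have hQap : Q a ≤ p := by rw [hp]; linarith
    set S : ℝ := sSup {x : ℝ | ∃ r : ℝ, 0 ≤ Q r - Q t ∧ Q r - Q t ≤ δ ∧
      x = ‖G r - G t‖} with hSdef
    have hSbdd : BddAbove {x : ℝ | ∃ r : ℝ, 0 ≤ Q r - Q t ∧ Q r - Q t ≤ δ ∧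
        x = ‖G r - G t‖} := by
      refine ⟨C + C, ?_⟩
      rintro x ⟨r, -, -, rfl⟩
      exact (norm_sub_le _ _).trans (add_le_add (hbdd r) (hbdd t))
    have hS0 : 0 ≤ S := by
      refine le_csSup hSbdd ⟨t, by simp, by simpa using hδ0, by simp⟩
    have hSle : ∀ r : ℝ, 0 ≤ Q r - Q t → Q r - Q t ≤ δ → ‖G r - G t‖ ≤ S :=
      fun r h1 h2 => le_csSup hSbdd ⟨r, h1, h2, rfl⟩
    -- tail weight integral
    have hTail : ∫ r in (⇑Q) ⁻¹' (Set.Ioi p), Real.exp (-(Q r - p) / c)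
        ∂(Q.measure.restrict (Set.Ici a)) = c := by
      have h1 := setIntegral_map (μ := Q.measure.restrict (Set.Ici a)) (g := ⇑Q) (s := Set.Ioi p)
        (f := fun x => Real.exp (-(x - p) / c)) measurableSet_Ioi
        (Continuous.aestronglyMeasurable (by continuity)) hQm.aemeasurable
      have hsub : Set.Ioi p ∩ Set.Ici (Q a) = Set.Ioi p :=
        Set.inter_eq_left.mpr (fun x hx => (hQap.trans (le_of_lt hx)))
      rw [← h1, hmap, Measure.restrict_restrict measurableSet_Ioi, hsub]
      exact aux_exp_integral p hcpos
    -- decomposition of the difference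
    have hIntGt : Integrable (fun r => Real.exp (-(Q r - Q a) / c) • G t)
        (Q.measure.restrict (Set.Ici a)) := hInt_e.smul_const (G t)
    have hIntD : Integrable (fun r => Real.exp (-(Q r - Q a) / c) • (G r - G t))
        (Q.measure.restrict (Set.Ici a)) := by
      have h := hIntF.sub hIntGt
      simp only [smul_sub]
      exact h
    have hdecomp : (c⁻¹ • ∫ r in Set.Ici a, Real.exp (-(Q r - Q a) / c) • G r ∂Q.measure) - G t
        = c⁻¹ • ∫ r in Set.Ici a, Real.exp (-(Q r - Q a) / c) • (G r - G t) ∂Q.measure := by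
      have h1 : ∫ r in Set.Ici a, Real.exp (-(Q r - Q a) / c) • (G r - G t) ∂Q.measure
          = (∫ r in Set.Ici a, Real.exp (-(Q r - Q a) / c) • G r ∂Q.measure)
            - (∫ r in Set.Ici a, Real.exp (-(Q r - Q a) / c) ∂Q.measure) • G t := by
        simp only [smul_sub]
        rw [integral_sub hIntF hIntGt, integral_smul_const]
      rw [h1, hW, smul_sub, smul_smul, inv_mul_cancel₀ hcpos.ne', one_smul]
    set s : Set ℝ := (⇑Q) ⁻¹' (Set.Iic p) with hsdef
    have hs : MeasurableSet s := hQm measurableSet_Iic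
    have hsc : sᶜ = (⇑Q) ⁻¹' (Set.Ioi p) := by
      rw [hsdef, ← Set.preimage_compl, Set.compl_Iic]
    -- near bound
    have hnear : ‖∫ r in s, Real.exp (-(Q r - Q a) / c) • (G r - G t)
        ∂(Q.measure.restrict (Set.Ici a))‖ ≤ S * c := by
      have hb : ‖∫ r in s, Real.exp (-(Q r - Q a) / c) • (G r - G t)
          ∂(Q.measure.restrict (Set.Ici a))‖
          ≤ ∫ r in s, S * Real.exp (-(Q r - Q a) / c) ∂(Q.measure.restrict (Set.Ici a)) := by
        refine norm_integral_le_of_norm_le ((hInt_e.const_mul S).restrict) ?_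
        rw [Measure.restrict_restrict hs]
        refine (ae_restrict_iff' (hs.inter measurableSet_Ici)).mpr
          (Filter.Eventually.of_forall fun r hr => ?_)
        obtain ⟨hr1, hr2⟩ := hr
        have h1 : 0 ≤ Q r - Q t := sub_nonneg.mpr (Q.mono (hta.trans hr2))
        have h2 : Q r - Q t ≤ δ := by
          have : Q r ≤ p := hr1
          rw [hp] at this
          linarith
        rw [norm_smul, Real.norm_eq_abs, abs_of_pos (Real.exp_pos _)]
        calc Real.exp (-(Q r - Q a) / c) * ‖G r - G t‖
            ≤ Real.exp (-(Q r - Q a) / c) * S :=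
              mul_le_mul_of_nonneg_left (hSle r h1 h2) (Real.exp_pos _).le
          _ = S * Real.exp (-(Q r - Q a) / c) := mul_comm _ _
      refine hb.trans ?_
      rw [integral_const_mul]
      exact mul_le_mul_of_nonneg_left
        ((setIntegral_le_integral hInt_e
          (Filter.Eventually.of_forall fun r => (Real.exp_pos _).le)).trans hW.le) hS0
    -- tail bound
    set k : ℝ := Real.exp ((Q a - p) / c) with hk
    have hk0 : 0 < k := Real.exp_pos _
    have hkey_e : ∀ r : ℝ, Real.exp (-(Q r - Q a) / c)
        = k * Real.exp (-(Q r - p) / c) := by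
      intro r
      rw [hk, ← Real.exp_add]
      congr 1
      ring
    have htail_e : ∫ r in sᶜ, Real.exp (-(Q r - Q a) / c)
        ∂(Q.measure.restrict (Set.Ici a)) = k * c := by
      rw [hsc]
      simp_rw [hkey_e]
      rw [integral_const_mul, hTail]
    have htail : ‖∫ r in sᶜ, Real.exp (-(Q r - Q a) / c) • (G r - G t)
        ∂(Q.measure.restrict (Set.Ici a))‖ ≤ (2 * M * k) * c := by
      have hb : ‖∫ r in sᶜ, Real.exp (-(Q r - Q a) / c) • (G r - G t)
          ∂(Q.measure.restrict (Set.Ici a))‖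
          ≤ ∫ r in sᶜ, (2 * M) * Real.exp (-(Q r - Q a) / c)
            ∂(Q.measure.restrict (Set.Ici a)) := by
        refine norm_integral_le_of_norm_le ((hInt_e.const_mul (2 * M)).restrict) ?_
        rw [Measure.restrict_restrict hs.compl]
        refine (ae_restrict_iff' (hs.compl.inter measurableSet_Ici)).mpr
          (Filter.Eventually.of_forall fun r hr => ?_)
        obtain ⟨-, hr2⟩ := hr
        rw [norm_smul, Real.norm_eq_abs, abs_of_pos (Real.exp_pos _)]
        have hGr : ‖G r - G t‖ ≤ 2 * M := by
          have := hMle r (ha0.trans hr2)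
          have := hMle t ht
          have := norm_sub_le (G r) (G t)
          linarith
        calc Real.exp (-(Q r - Q a) / c) * ‖G r - G t‖
            ≤ Real.exp (-(Q r - Q a) / c) * (2 * M) :=
              mul_le_mul_of_nonneg_left hGr (Real.exp_pos _).le
          _ = (2 * M) * Real.exp (-(Q r - Q a) / c) := mul_comm _ _
      refine hb.trans ?_
      rw [integral_const_mul, htail_e]
      ring_nf
      exact le_rfl
    -- combine
    have hJ : ‖∫ r in Set.Ici a, Real.exp (-(Q r - Q a) / c) • (G r - G t) ∂Q.measure‖
        ≤ S * c + (2 * M * k) * c := by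
      rw [← integral_add_compl hs hIntD]
      exact (norm_add_le _ _).trans (add_le_add hnear htail)
    -- exponent estimate
    have hscpos : 0 < Real.sqrt c := Real.sqrt_pos.mpr hcpos
    have h2k : 2 * k ≤ Real.exp (2 - 1 / Real.sqrt c) := by
      have hδsc : Real.sqrt c / c ≤ δ / c :=
        (div_le_div_iff_of_pos_right hcpos).mpr (le_max_left _ _)
      have hsqc : Real.sqrt c / c = 1 / Real.sqrt c := Real.sqrt_div_self'
      have h1 : (Q a - p) / c ≤ 1 - 1 / Real.sqrt c := by
        have h2 : (Q a - p) / c ≤ (c - δ) / c :=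
          (div_le_div_iff_of_pos_right hcpos).mpr (by rw [hp]; linarith)
        rw [sub_div c δ c, div_self hcpos.ne'] at h2
        linarith [hsqc ▸ hδsc]
      have hke : k ≤ Real.exp (1 - 1 / Real.sqrt c) := by
        rw [hk]
        exact Real.exp_le_exp.mpr h1
      have he1 : (2:ℝ) ≤ Real.exp 1 := by
        have := Real.add_one_le_exp 1
        linarith
      calc 2 * k ≤ Real.exp 1 * Real.exp (1 - 1 / Real.sqrt c) :=
            mul_le_mul he1 hke hk0.le (Real.exp_pos _).le
        _ = Real.exp (2 - 1 / Real.sqrt c) := by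
            rw [← Real.exp_add]
            congr 1
            ring
    rw [hdecomp, norm_smul, Real.norm_eq_abs, abs_of_pos (inv_pos.mpr hcpos)]
    calc c⁻¹ * ‖∫ r in Set.Ici a, Real.exp (-(Q r - Q a) / c) • (G r - G t) ∂Q.measure‖
        ≤ c⁻¹ * (S * c + (2 * M * k) * c) :=
          mul_le_mul_of_nonneg_left hJ (inv_pos.mpr hcpos).le
      _ = 2 * M * k + S := by field_simp; ring
      _ ≤ Real.exp (2 - 1 / Real.sqrt c) * M + S := by
          have : 2 * M * k = (2 * k) * M := by ring
          rw [this]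
          exact add_le_add_left (mul_le_mul_of_nonneg_right h2k hM0) S
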